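/- Let X₁,…,X_p and R be random variables with finitely many values on a finite probability space such that R is independent of the tuple (X₁,…,X_p), and let C = f(X₁, R) for some function f. Then the conditional total correlation satisfies I(X₁:⋯:X_p | C) ≤ I(X₁:⋯:X_p). -/

import Mathlib

open scoped BigOperators

noncomputable section

/-- Base-2 Shannon entropy of a finitely supported (sub)probability vector. -/
def shannonH {V : Type} [Fintype V] (q : V → ℝ) : ℝ :=
  -∑ a, q a * Real.logb 2 (q a)

/-- Distribution (probability mass function) of a random variable `X` on a finite
probability space with probability mass function `μ`. -/
def pdist {Ω V : Type} [Fintype Ω] [DecidableEq V] (μ : Ω → ℝ) (X : Ω → V) : V → ℝ :=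
  fun a => ∑ ω, if X ω = a then μ ω else 0

/-- Shannon entropy `H(X)` of a random variable. -/
def entH {Ω V : Type} [Fintype Ω] [Fintype V] [DecidableEq V] (μ : Ω → ℝ) (X : Ω → V) : ℝ :=
  shannonH (pdist μ X)

/-- Conditional entropy `H(X|Y) = H(X,Y) − H(Y)`. -/
def condH {Ω V W : Type} [Fintype Ω] [Fintype V] [DecidableEq V] [Fintype W] [DecidableEq W]
    (μ : Ω → ℝ) (X : Ω → V) (Y : Ω → W) : ℝ :=
  entH μ (fun ω => (X ω, Y ω)) - entH μ Y

/-- Mutual information `I(X:Y) = H(X) + H(Y) − H(X,Y)`. -/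
def mutualI {Ω V W : Type} [Fintype Ω] [Fintype V] [DecidableEq V] [Fintype W] [DecidableEq W]
    (μ : Ω → ℝ) (X : Ω → V) (Y : Ω → W) : ℝ :=
  entH μ X + entH μ Y - entH μ (fun ω => (X ω, Y ω))

/-- Total correlation `I(X₁:⋯:X_p) = Σᵢ H(Xᵢ) − H(X₁,…,X_p)`. -/
def totCorr {Ω : Type} [Fintype Ω] {p : ℕ} {V : Fin p → Type}
    [∀ i, Fintype (V i)] [∀ i, DecidableEq (V i)]
    (μ : Ω → ℝ) (X : ∀ i, Ω → V i) : ℝ :=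
  (∑ i, entH μ (X i)) - entH μ (fun ω => (fun i => X i ω))

/-- Conditional total correlation `I(X₁:⋯:X_p|C) = Σᵢ H(Xᵢ|C) − H(X₁,…,X_p|C)`. -/
def condTotCorr {Ω : Type} [Fintype Ω] {p : ℕ} {V : Fin p → Type}
    [∀ i, Fintype (V i)] [∀ i, DecidableEq (V i)] {W : Type} [Fintype W] [DecidableEq W]
    (μ : Ω → ℝ) (X : ∀ i, Ω → V i) (C : Ω → W) : ℝ :=
  (∑ i, condH μ (X i) C) - condH μ (fun ω => (fun i => X i ω)) C


section Aux

variable {Ω : Type} [Fintype Ω]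

lemma pdist_nonneg {V : Type} [DecidableEq V] {μ : Ω → ℝ} (hμ0 : ∀ ω, 0 ≤ μ ω)
    (X : Ω → V) (a : V) : 0 ≤ pdist μ X a := by
  apply Finset.sum_nonneg
  intro ω _
  split
  · exact hμ0 ω
  · exact le_refl 0

lemma sum_pdist_mul {V : Type} [Fintype V] [DecidableEq V] (μ : Ω → ℝ) (X : Ω → V)
    (φ : V → ℝ) : ∑ a, pdist μ X a * φ a = ∑ ω, μ ω * φ (X ω) := by
  unfold pdist
  simp_rw [Finset.sum_mul]
  rw [Finset.sum_comm]
  congr 1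
  ext ω
  simp [ite_mul]

lemma sum_pdist {V : Type} [Fintype V] [DecidableEq V] {μ : Ω → ℝ} (hμ1 : ∑ ω, μ ω = 1)
    (X : Ω → V) : ∑ a, pdist μ X a = 1 := by
  have := sum_pdist_mul μ X (fun _ => 1)
  simpa [hμ1] using this

lemma pdist_comp {V U : Type} [Fintype V] [DecidableEq V] [DecidableEq U]
    (μ : Ω → ℝ) (X : Ω → V) (φ : V → U) (b : U) :
    pdist μ (fun ω => φ (X ω)) b = ∑ a, if φ a = b then pdist μ X a else 0 := by
  unfold pdist
  have : ∀ a : V, (if φ a = b then ∑ ω, if X ω = a then μ ω else 0 else 0)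
      = ∑ ω, if X ω = a then (if φ a = b then μ ω else 0) else 0 := by
    intro a
    split
    · rfl
    · simp
  simp_rw [this]
  rw [Finset.sum_comm]
  congr 1
  ext ω
  rw [Finset.sum_ite_eq Finset.univ (X ω) (fun a => if φ a = b then μ ω else 0)]
  simp

lemma shannonH_eq_log {V : Type} [Fintype V] (q : V → ℝ) :
    shannonH q = -(∑ a, q a * Real.log (q a)) / Real.log 2 := by
  unfold shannonH
  rw [neg_div]
  congr 1
  rw [Finset.sum_div]
  refine Finset.sum_congr rfl fun a _ => ?_
  rw [Real.logb, mul_div_assoc]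

lemma gibbs {A B : Type} [Fintype A] [Fintype B] (q : A × B → ℝ)
    (hq0 : ∀ x, 0 ≤ q x) (hq1 : ∑ x, q x = 1) :
    shannonH q ≤ shannonH (fun a => ∑ b, q (a, b)) + shannonH (fun b => ∑ a, q (a, b)) := by
  set qX : A → ℝ := fun a => ∑ b, q (a, b) with hqX
  set qY : B → ℝ := fun b => ∑ a, q (a, b) with hqY
  have hqX0 : ∀ a, 0 ≤ qX a := fun a => Finset.sum_nonneg fun b _ => hq0 _
  have hqY0 : ∀ b, 0 ≤ qY b := fun b => Finset.sum_nonneg fun a _ => hq0 _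
  have hle : ∀ a b, q (a, b) ≤ qX a := by
    intro a b
    exact Finset.single_le_sum (fun b _ => hq0 (a, b)) (Finset.mem_univ b)
  have hle' : ∀ a b, q (a, b) ≤ qY b := by
    intro a b
    exact Finset.single_le_sum (fun a _ => hq0 (a, b)) (Finset.mem_univ a)
  have hsumX : ∑ a, qX a = 1 := by rw [← hq1, Fintype.sum_prod_type]
  have hsumY : ∑ b, qY b = 1 := by rw [← hq1, Fintype.sum_prod_type_right]
  rw [shannonH_eq_log, shannonH_eq_log, shannonH_eq_log, ← add_div,
    div_le_div_iff_of_pos_right (by positivity : (0:ℝ) < Real.log 2)]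
  have hX : ∑ a, qX a * Real.log (qX a) = ∑ x : A × B, q x * Real.log (qX x.1) := by
    rw [Fintype.sum_prod_type]
    refine Finset.sum_congr rfl fun a _ => ?_
    rw [Finset.sum_mul]
  have hY : ∑ b, qY b * Real.log (qY b) = ∑ x : A × B, q x * Real.log (qY x.2) := by
    rw [Fintype.sum_prod_type_right]
    refine Finset.sum_congr rfl fun b _ => ?_
    rw [Finset.sum_mul]
  rw [hX, hY, ← neg_add, neg_le_neg_iff, ← Finset.sum_add_distrib]
  -- ∑ q (log qX + log qY) ≤ ∑ q log q
  have key : ∀ x : A × B, q x * Real.log (qX x.1) + q x * Real.log (qY x.2)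
      ≤ q x * Real.log (q x) + (qX x.1 * qY x.2 - q x) := by
    intro x
    rcases eq_or_lt_of_le (hq0 x) with h0 | h0
    · rw [← h0]
      simpa using mul_nonneg (hqX0 x.1) (hqY0 x.2)
    · have hx : 0 < qX x.1 := lt_of_lt_of_le h0 (hle x.1 x.2)
      have hy : 0 < qY x.2 := lt_of_lt_of_le h0 (hle' x.1 x.2)
      have hm : 0 < qX x.1 * qY x.2 := mul_pos hx hy
      have hlog : Real.log (qX x.1 * qY x.2 / q x) ≤ qX x.1 * qY x.2 / q x - 1 :=
        Real.log_le_sub_one_of_pos (by positivity)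
      have := mul_le_mul_of_nonneg_left hlog (le_of_lt h0)
      rw [Real.log_div (ne_of_gt hm) (ne_of_gt h0),
        Real.log_mul (ne_of_gt hx) (ne_of_gt hy)] at this
      have h2 : q x * (qX x.1 * qY x.2 / q x - 1) = qX x.1 * qY x.2 - q x := by
        field_simp
      rw [h2] at this
      nlinarith [this]
  calc ∑ x : A × B, (q x * Real.log (qX x.1) + q x * Real.log (qY x.2))
      ≤ ∑ x : A × B, (q x * Real.log (q x) + (qX x.1 * qY x.2 - q x)) :=
        Finset.sum_le_sum fun x _ => key x
    _ = ∑ x : A × B, q x * Real.log (q x) := by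
        rw [Finset.sum_add_distrib, Finset.sum_sub_distrib, hq1]
        have : ∑ x : A × B, qX x.1 * qY x.2 = 1 := by
          rw [Fintype.sum_prod_type]
          simp_rw [← Finset.mul_sum]
          rw [← Finset.sum_mul, hsumX, hsumY, one_mul]
        rw [this]
        ring

lemma shannonH_kernel {A B : Type} [Fintype A] [Fintype B] (q : A × B → ℝ) (π : A → ℝ)
    (g : A → B → ℝ) (hg1 : ∀ a, ∑ b, g a b = 1)
    (hq : ∀ a b, q (a, b) = π a * g a b) :
    shannonH q = shannonH π + ∑ a, π a * shannonH (g a) := by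
  unfold shannonH
  rw [Fintype.sum_prod_type]
  have key : ∀ a b, q (a, b) * Real.logb 2 (q (a, b))
      = g a b * (π a * Real.logb 2 (π a)) + π a * (g a b * Real.logb 2 (g a b)) := by
    intro a b
    rw [hq a b]
    rcases eq_or_ne (π a) 0 with h | h
    · simp [h]
    rcases eq_or_ne (g a b) 0 with h' | h'
    · simp [h']
    rw [Real.logb_mul h h']
    ring
  simp_rw [key, Finset.sum_add_distrib]
  rw [neg_add]
  congr 1
  · congr 1
    refine Finset.sum_congr rfl fun a _ => ?_
    rw [← Finset.sum_mul, hg1 a, one_mul]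
  · rw [← Finset.sum_neg_distrib]
    refine Finset.sum_congr rfl fun a _ => ?_
    rw [← Finset.mul_sum]
    ring

/-- Generic: joint distribution of `(Z, C)` where `C = h(Z, R)`. -/
lemma joint_cond {U W T : Type} [Fintype U] [DecidableEq U] [Fintype W] [DecidableEq W]
    [DecidableEq T] (μ : Ω → ℝ) (Z : Ω → U) (R : Ω → W) (h : U → W → T) (C : Ω → T)
    (hC : ∀ ω, C ω = h (Z ω) (R ω)) (u : U) (c : T) :
    pdist μ (fun ω => (Z ω, C ω)) (u, c)
      = ∑ r, if h u r = c then pdist μ (fun ω => (Z ω, R ω)) (u, r) else 0 := by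
  unfold pdist
  have pt : ∀ ω, (if (Z ω, C ω) = (u, c) then μ ω else 0)
      = ∑ r, if h u r = c then (if (Z ω, R ω) = (u, r) then μ ω else 0) else 0 := by
    intro ω
    have : ∀ r : W, (if h u r = c then (if (Z ω, R ω) = (u, r) then μ ω else 0) else 0)
        = if R ω = r then (if Z ω = u ∧ h u r = c then μ ω else 0) else 0 := by
      intro r
      by_cases h1 : R ω = r <;> by_cases h2 : Z ω = u <;> by_cases h3 : h u r = c <;>
        simp_all [Prod.ext_iff]
    rw [Finset.sum_congr rfl fun r _ => this r,
      Finset.sum_ite_eq Finset.univ (R ω) (fun r => if Z ω = u ∧ h u r = c then μ ω else 0)]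
    simp only [Finset.mem_univ, if_true, Prod.ext_iff]
    by_cases h2 : Z ω = u
    · subst h2
      rw [hC ω]
    · simp [h2]
  rw [Finset.sum_congr rfl fun ω _ => pt ω, Finset.sum_comm]
  refine Finset.sum_congr rfl fun r _ => ?_
  split <;> simp

lemma pdist_fst {V W : Type} [Fintype V] [DecidableEq V] [Fintype W] [DecidableEq W]
    (μ : Ω → ℝ) (X : Ω → V) (Y : Ω → W) (a : V) :
    pdist μ X a = ∑ b, pdist μ (fun ω => (X ω, Y ω)) (a, b) := by
  have h := pdist_comp μ (fun ω => (X ω, Y ω)) Prod.fst a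
  have h2 : pdist μ (fun ω => ((X ω, Y ω)).1) a = pdist μ X a := rfl
  rw [h2] at h
  rw [h, Fintype.sum_prod_type]
  have : ∀ a' : V, (∑ b, if (a', b).1 = a then pdist μ (fun ω => (X ω, Y ω)) (a', b) else 0)
      = if a' = a then (∑ b, pdist μ (fun ω => (X ω, Y ω)) (a', b)) else 0 := by
    intro a'
    split <;> simp_all
  rw [Finset.sum_congr rfl fun a' _ => this a',
    Finset.sum_ite_eq' Finset.univ a (fun a' => ∑ b, pdist μ (fun ω => (X ω, Y ω)) (a', b))]
  simp

lemma pdist_snd {V W : Type} [Fintype V] [DecidableEq V] [Fintype W] [DecidableEq W]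
    (μ : Ω → ℝ) (X : Ω → V) (Y : Ω → W) (b : W) :
    pdist μ Y b = ∑ a, pdist μ (fun ω => (X ω, Y ω)) (a, b) := by
  have h := pdist_comp μ (fun ω => (X ω, Y ω)) Prod.snd b
  have h2 : pdist μ (fun ω => ((X ω, Y ω)).2) b = pdist μ Y b := rfl
  rw [h2] at h
  rw [h, Fintype.sum_prod_type_right]
  have : ∀ b' : W, (∑ a, if (a, b').2 = b then pdist μ (fun ω => (X ω, Y ω)) (a, b') else 0)
      = if b' = b then (∑ a, pdist μ (fun ω => (X ω, Y ω)) (a, b')) else 0 := by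
    intro b'
    split <;> simp_all
  rw [Finset.sum_congr rfl fun b' _ => this b',
    Finset.sum_ite_eq' Finset.univ b (fun b' => ∑ a, pdist μ (fun ω => (X ω, Y ω)) (a, b'))]
  simp

lemma entH_pair_le {V W : Type} [Fintype V] [DecidableEq V] [Fintype W] [DecidableEq W]
    {μ : Ω → ℝ} (hμ0 : ∀ ω, 0 ≤ μ ω) (hμ1 : ∑ ω, μ ω = 1) (X : Ω → V) (Y : Ω → W) :
    entH μ (fun ω => (X ω, Y ω)) ≤ entH μ X + entH μ Y := by
  have hg := gibbs (pdist μ (fun ω => (X ω, Y ω)))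
    (fun x => pdist_nonneg hμ0 _ x) (sum_pdist hμ1 _)
  have hX : pdist μ X = fun a => ∑ b, pdist μ (fun ω => (X ω, Y ω)) (a, b) :=
    funext fun a => pdist_fst μ X Y a
  have hY : pdist μ Y = fun b => ∑ a, pdist μ (fun ω => (X ω, Y ω)) (a, b) :=
    funext fun b => pdist_snd μ X Y b
  unfold entH
  rw [hX, hY]
  exact hg

end Aux

/-- **Public communication from one party's data and shared randomness cannot increase
the total correlation.** If `R` is independent of `(X₁,…,X_p)` and `C = f(X₁, R)`, then
`I(X₁:⋯:X_p | C) ≤ I(X₁:⋯:X_p)`. -/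
theorem stmt10 {Ω : Type} [Fintype Ω] {p : ℕ} (hp : 1 ≤ p) {V : Fin p → Type}
    [∀ i, Fintype (V i)] [∀ i, DecidableEq (V i)]
    {W T : Type} [Fintype W] [DecidableEq W] [Fintype T] [DecidableEq T]
    (μ : Ω → ℝ) (hμ0 : ∀ ω, 0 ≤ μ ω) (hμ1 : ∑ ω, μ ω = 1)
    (X : ∀ i, Ω → V i) (R : Ω → W)
    (hindep : ∀ (a : ∀ i, V i) (r : W),
      pdist μ (fun ω => ((fun i => X i ω), R ω)) (a, r)
        = pdist μ (fun ω => (fun i => X i ω)) a * pdist μ R r)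
    (f : V ⟨0, hp⟩ → W → T) (C : Ω → T) (hC : ∀ ω, C ω = f (X ⟨0, hp⟩ ω) (R ω)) :
    condTotCorr μ X C ≤ totCorr μ X := by
  set Xt : Ω → (∀ i, V i) := fun ω => (fun i => X i ω) with hXt
  set π : (∀ i, V i) → ℝ := pdist μ Xt with hπ
  set π₀ : V (⟨0, hp⟩ : Fin p) → ℝ := pdist μ (X (⟨0, hp⟩ : Fin p)) with hπ₀
  set ρ : W → ℝ := pdist μ R with hρ
  set g : V (⟨0, hp⟩ : Fin p) → T → ℝ := fun a₀ c => ∑ r, if f a₀ r = c then ρ r else 0 with hg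
  -- g is a kernel
  have hg1 : ∀ a₀, ∑ c, g a₀ c = 1 := by
    intro a₀
    rw [hg]
    rw [Finset.sum_comm]
    have : ∀ r : W, (∑ c, if f a₀ r = c then ρ r else 0) = ρ r := by
      intro r
      rw [Finset.sum_ite_eq Finset.univ (f a₀ r) (fun _ => ρ r)]
      simp
    rw [Finset.sum_congr rfl fun r _ => this r]
    exact sum_pdist hμ1 R
  -- marginal of π at coordinate (⟨0, hp⟩ : Fin p)
  have hmarg : ∀ a₀ : V (⟨0, hp⟩ : Fin p), π₀ a₀ = ∑ a, if a (⟨0, hp⟩ : Fin p) = a₀ then π a else 0 := by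
    intro a₀
    exact pdist_comp μ Xt (fun a => a (⟨0, hp⟩ : Fin p)) a₀
  -- independence of X (⟨0, hp⟩ : Fin p) and R
  have hindep0 : ∀ (a₀ : V (⟨0, hp⟩ : Fin p)) (r : W),
      pdist μ (fun ω => (X (⟨0, hp⟩ : Fin p) ω, R ω)) (a₀, r) = π₀ a₀ * ρ r := by
    intro a₀ r
    have h := pdist_comp μ (fun ω => (Xt ω, R ω))
      (fun x => (x.1 (⟨0, hp⟩ : Fin p), x.2)) (a₀, r)
    have h2 : pdist μ (fun ω => ((Xt ω, R ω).1 (⟨0, hp⟩ : Fin p), (Xt ω, R ω).2)) (a₀, r)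
        = pdist μ (fun ω => (X (⟨0, hp⟩ : Fin p) ω, R ω)) (a₀, r) := rfl
    rw [h2] at h
    rw [h, Fintype.sum_prod_type]
    have step : ∀ a : ∀ i, V i,
        (∑ r' : W, if ((a, r').1 (⟨0, hp⟩ : Fin p), (a, r').2) = (a₀, r)
          then pdist μ (fun ω => (Xt ω, R ω)) (a, r') else 0)
        = if a (⟨0, hp⟩ : Fin p) = a₀ then π a * ρ r else 0 := by
      intro a
      have : ∀ r' : W, (if ((a, r').1 (⟨0, hp⟩ : Fin p), (a, r').2) = (a₀, r)
            then pdist μ (fun ω => (Xt ω, R ω)) (a, r') else 0)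
          = if r' = r then (if a (⟨0, hp⟩ : Fin p) = a₀ then π a * ρ r' else 0) else 0 := by
        intro r'
        by_cases h1 : r' = r <;> by_cases h3 : a (⟨0, hp⟩ : Fin p) = a₀ <;>
          simp_all [Prod.ext_iff, hindep a r']
      rw [Finset.sum_congr rfl fun r' _ => this r',
        Finset.sum_ite_eq' Finset.univ r (fun r' => if a (⟨0, hp⟩ : Fin p) = a₀ then π a * ρ r' else 0)]
      simp
    rw [Finset.sum_congr rfl fun a _ => step a]
    rw [hmarg a₀, Finset.sum_mul]
    refine Finset.sum_congr rfl fun a _ => ?_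
    split <;> simp
  -- factorization of joint (Xt, C)
  have hfac : ∀ (a : ∀ i, V i) (c : T),
      pdist μ (fun ω => (Xt ω, C ω)) (a, c) = π a * g (a (⟨0, hp⟩ : Fin p)) c := by
    intro a c
    have h := joint_cond μ Xt R (fun a r => f (a (⟨0, hp⟩ : Fin p)) r) C (fun ω => hC ω) a c
    rw [h, hg, Finset.mul_sum]
    refine Finset.sum_congr rfl fun r _ => ?_
    rw [hindep a r]
    split <;> simp
  -- factorization of joint (X (⟨0, hp⟩ : Fin p), C)
  have hfac0 : ∀ (a₀ : V (⟨0, hp⟩ : Fin p)) (c : T),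
      pdist μ (fun ω => (X (⟨0, hp⟩ : Fin p) ω, C ω)) (a₀, c) = π₀ a₀ * g a₀ c := by
    intro a₀ c
    have h := joint_cond μ (X (⟨0, hp⟩ : Fin p)) R f C hC a₀ c
    rw [h, hg, Finset.mul_sum]
    refine Finset.sum_congr rfl fun r _ => ?_
    rw [hindep0 a₀ r]
    split <;> simp
  -- chain rule via kernel
  have h1 : entH μ (fun ω => (Xt ω, C ω))
      = entH μ Xt + ∑ a, π a * shannonH (g (a (⟨0, hp⟩ : Fin p))) := by
    exact shannonH_kernel (pdist μ (fun ω => (Xt ω, C ω))) π (fun a => g (a (⟨0, hp⟩ : Fin p)))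
      (fun a => hg1 (a (⟨0, hp⟩ : Fin p))) (fun a c => hfac a c)
  have h0 : entH μ (fun ω => (X (⟨0, hp⟩ : Fin p) ω, C ω))
      = entH μ (X (⟨0, hp⟩ : Fin p)) + ∑ a₀, π₀ a₀ * shannonH (g a₀) := by
    exact shannonH_kernel (pdist μ (fun ω => (X (⟨0, hp⟩ : Fin p) ω, C ω))) π₀ g hg1 hfac0
  have hexp : ∑ a, π a * shannonH (g (a (⟨0, hp⟩ : Fin p))) = ∑ a₀, π₀ a₀ * shannonH (g a₀) := by
    rw [hπ, hπ₀, sum_pdist_mul μ Xt (fun a => shannonH (g (a (⟨0, hp⟩ : Fin p)))),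
      sum_pdist_mul μ (X (⟨0, hp⟩ : Fin p)) (fun a₀ => shannonH (g a₀))]
  -- key equality
  have hkey : entH μ (fun ω => (Xt ω, C ω)) - entH μ Xt
      = entH μ (fun ω => (X (⟨0, hp⟩ : Fin p) ω, C ω)) - entH μ (X (⟨0, hp⟩ : Fin p)) := by
    rw [h1, h0, hexp]; ring
  -- nonnegativity of all mutual informations
  have hnn : ∀ i, 0 ≤ entH μ (X i) + entH μ C - entH μ (fun ω => (X i ω, C ω)) := by
    intro i
    have := entH_pair_le hμ0 hμ1 (X i) C
    linarith
  have hsingle : entH μ (X (⟨0, hp⟩ : Fin p)) + entH μ C - entH μ (fun ω => (X (⟨0, hp⟩ : Fin p) ω, C ω))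
      ≤ ∑ i, (entH μ (X i) + entH μ C - entH μ (fun ω => (X i ω, C ω))) :=
    Finset.single_le_sum (fun i _ => hnn i) (Finset.mem_univ (⟨0, hp⟩ : Fin p))
  have hexpand : ∑ i, (entH μ (X i) + entH μ C - entH μ (fun ω => (X i ω, C ω)))
      = (∑ i, entH μ (X i)) - ∑ i, (entH μ (fun ω => (X i ω, C ω)) - entH μ C) := by
    rw [Finset.sum_sub_distrib, Finset.sum_sub_distrib, Finset.sum_add_distrib]
    ring
  unfold condTotCorr totCorr condH
  rw [hexpand] at hsingle
  have hsum : ∑ i, (entH μ (fun ω => (X i ω, C ω)) - entH μ C)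
      = ∑ i, condH μ (X i) C := rfl
  linarith [hkey, hsingle]

end
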